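/- For a uniformly random permutation of {1,...,n} and any two distinct positive integers k₁ < k₂ ≤ n, the probability that the permutation has both a cycle of length k₁ and a cycle of length k₂ is at most 1/(k₁·k₂). -/

import Mathlib

open Function

namespace Stmt0Aux

/-- next element map on the disjoint union of two cyclic index sets -/
def nxt (k₁ k₂ : ℕ) [NeZero k₁] [NeZero k₂] : Fin k₁ ⊕ Fin k₂ → Fin k₁ ⊕ Fin k₂ :=
  Sum.map (· + 1) (· + 1)

lemma nxt_surj (k₁ k₂ : ℕ) [NeZero k₁] [NeZero k₂] : Surjective (nxt k₁ k₂) := by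
  rintro (s | s)
  · exact ⟨Sum.inl (s - 1), by simp [nxt]⟩
  · exact ⟨Sum.inr (s - 1), by simp [nxt]⟩

lemma val_add_one_mod {k : ℕ} [NeZero k] (t : Fin k) :
    ((t + 1 : Fin k) : ℕ) = (t.1 + 1) % k := by
  rw [Fin.val_add, Fin.val_one', Nat.add_mod t.1 1 k, Nat.mod_eq_of_lt t.isLt]

lemma iter_congr {α : Type*} {f : α → α} {x : α} {k a b : ℕ}
    (h : minimalPeriod f x = k) (hab : a % k = b % k) : f^[a] x = f^[b] x := by
  conv_lhs => rw [← Function.iterate_mod_minimalPeriod_eq (n := a)]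
  conv_rhs => rw [← Function.iterate_mod_minimalPeriod_eq (n := b)]
  rw [h, hab]

lemma iter_inj {α : Type*} {f : α → α} {x : α} {k a b : ℕ} (hk : 0 < k)
    (h : minimalPeriod f x = k) (heq : f^[a] x = f^[b] x) : a % k = b % k := by
  have h1 : f^[a % k] x = f^[b % k] x := by
    rw [← h, Function.iterate_mod_minimalPeriod_eq, Function.iterate_mod_minimalPeriod_eq]
    exact heq
  exact Function.iterate_injOn_Iio_minimalPeriod (f := f) (x := x)
    (show a % k ∈ Set.Iio (minimalPeriod f x) by rw [h]; exact Nat.mod_lt _ hk)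
    (show b % k ∈ Set.Iio (minimalPeriod f x) by rw [h]; exact Nat.mod_lt _ hk) h1

lemma iter_ne {α : Type*} {f : α → α} {x y : α} {k₁ k₂ : ℕ} (hk₁ : 0 < k₁) (hk₂ : 0 < k₂)
    (hx : minimalPeriod f x = k₁) (hy : minimalPeriod f y = k₂) (hne : k₁ ≠ k₂)
    (a b : ℕ) : f^[a] x ≠ f^[b] y := by
  intro h
  have hxp : x ∈ periodicPts f := minimalPeriod_pos_iff_mem_periodicPts.mp (hx ▸ hk₁)
  have hyp : y ∈ periodicPts f := minimalPeriod_pos_iff_mem_periodicPts.mp (hy ▸ hk₂)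
  have h1 := Function.minimalPeriod_apply_iterate hxp (n := a)
  have h2 := Function.minimalPeriod_apply_iterate hyp (n := b)
  rw [hx, h] at h1
  rw [hy] at h2
  exact hne (h1.symm.trans h2)

variable {n k₁ k₂ : ℕ}

/-- The auxiliary set of pairs (permutation, marked pair of cycles). -/
abbrev PP (n k₁ k₂ : ℕ) [NeZero k₁] [NeZero k₂] :=
  {p : Equiv.Perm (Fin n) × (Fin k₁ ⊕ Fin k₂ ↪ Fin n) //
    ∀ a, p.1 (p.2 a) = p.2 (nxt k₁ k₂ a)}

lemma mem_range_iff [NeZero k₁] [NeZero k₂] (p : PP n k₁ k₂) (z : Fin n) :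
    z ∈ Set.range p.1.2 ↔ p.1.1 z ∈ Set.range p.1.2 := by
  constructor
  · rintro ⟨a, rfl⟩; exact ⟨nxt k₁ k₂ a, (p.2 a).symm⟩
  · rintro ⟨a, ha⟩
    obtain ⟨b, rfl⟩ := nxt_surj k₁ k₂ a
    rw [← p.2 b] at ha
    exact ⟨b, p.1.1.injective ha⟩

def toSigma (n k₁ k₂ : ℕ) [NeZero k₁] [NeZero k₂] (p : PP n k₁ k₂) :
    Σ e : Fin k₁ ⊕ Fin k₂ ↪ Fin n, Equiv.Perm {z : Fin n // z ∉ Set.range e} :=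
  ⟨p.1.2, p.1.1.subtypePerm (fun z => not_iff_not.mpr (mem_range_iff p z).symm)⟩

lemma toSigma_inj (n k₁ k₂ : ℕ) [NeZero k₁] [NeZero k₂] :
    Injective (toSigma n k₁ k₂) := by
  rintro ⟨⟨σ, e⟩, hp⟩ ⟨⟨τ, f⟩, hq⟩ h
  have he : e = f := congrArg Sigma.fst h
  subst he
  have h2 := sigma_mk_injective h
  refine Subtype.ext (Prod.ext ?_ rfl)
  ext z
  by_cases hz : z ∈ Set.range e
  · obtain ⟨a, rfl⟩ := hz
    rw [show σ (e a) = e (nxt k₁ k₂ a) from hp a, show τ (e a) = e (nxt k₁ k₂ a) from hq a]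
  · have := congrArg (fun π : Equiv.Perm {z : Fin n // z ∉ Set.range e} =>
      (π ⟨z, hz⟩ : {z : Fin n // z ∉ Set.range e}).1) h2
    have h3 : σ z = τ z := by simpa using this
    exact congrArg Fin.val h3

lemma step2 (n k₁ k₂ : ℕ) [NeZero k₁] [NeZero k₂] :
    Nat.card (PP n k₁ k₂) ≤ n.factorial := by
  classical
  have h1 : Nat.card (PP n k₁ k₂) ≤
      Nat.card (Σ e : Fin k₁ ⊕ Fin k₂ ↪ Fin n, Equiv.Perm {z : Fin n // z ∉ Set.range e}) :=
    Nat.card_le_card_of_injective _ (toSigma_inj n k₁ k₂)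
  refine h1.trans ?_
  rw [Nat.card_eq_fintype_card, Fintype.card_sigma]
  have hcard : ∀ e : Fin k₁ ⊕ Fin k₂ ↪ Fin n,
      Fintype.card (Equiv.Perm {z : Fin n // z ∉ Set.range e}) = (n - (k₁ + k₂)).factorial := by
    intro e
    rw [Fintype.card_perm]
    congr 1
    have hr : Fintype.card {z : Fin n // z ∈ Set.range e} = k₁ + k₂ := by
      rw [Fintype.card_congr (Equiv.ofInjective _ e.injective).symm]
      simp
    rw [Fintype.card_subtype_compl, hr, Fintype.card_fin]
  rw [Finset.sum_congr rfl (fun e _ => hcard e), Finset.sum_const, smul_eq_mul,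
    Finset.card_univ, Fintype.card_embedding_eq]
  simp only [Fintype.card_fin, Fintype.card_sum]
  rcases le_or_gt (k₁ + k₂) n with h | h
  · rw [mul_comm, Nat.factorial_mul_descFactorial h]
  · rw [Nat.descFactorial_eq_zero_iff_lt.mpr h]
    rw [Nat.zero_mul]
    exact Nat.zero_le _

def emap [NeZero k₁] [NeZero k₂] (σ : Equiv.Perm (Fin n)) (x y : Fin n)
    (i : Fin k₁) (j : Fin k₂) : Fin k₁ ⊕ Fin k₂ → Fin n :=
  Sum.elim (fun t => (⇑σ)^[i.1 + t.1] x) (fun t => (⇑σ)^[j.1 + t.1] y)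

lemma emap_inj [NeZero k₁] [NeZero k₂] {σ : Equiv.Perm (Fin n)} {x y : Fin n}
    (hk₁ : 0 < k₁) (hk₂ : 0 < k₂)
    (hx : minimalPeriod σ x = k₁) (hy : minimalPeriod σ y = k₂) (hne : k₁ ≠ k₂)
    (i : Fin k₁) (j : Fin k₂) : Injective (emap σ x y i j) := by
  rintro (t | t) (t' | t') h
  · have h1 : (i.1 + t.1) % k₁ = (i.1 + t'.1) % k₁ := iter_inj hk₁ hx h
    have h2 : t.1 % k₁ = t'.1 % k₁ := Nat.ModEq.add_left_cancel' i.1 h1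
    rw [Nat.mod_eq_of_lt t.isLt, Nat.mod_eq_of_lt t'.isLt] at h2
    exact congrArg Sum.inl (Fin.ext h2)
  · exact absurd h (iter_ne hk₁ hk₂ hx hy hne _ _)
  · exact absurd h.symm (iter_ne hk₁ hk₂ hx hy hne _ _)
  · have h1 : (j.1 + t.1) % k₂ = (j.1 + t'.1) % k₂ := iter_inj hk₂ hy h
    have h2 : t.1 % k₂ = t'.1 % k₂ := Nat.ModEq.add_left_cancel' j.1 h1
    rw [Nat.mod_eq_of_lt t.isLt, Nat.mod_eq_of_lt t'.isLt] at h2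
    exact congrArg Sum.inr (Fin.ext h2)

lemma emap_prop [NeZero k₁] [NeZero k₂] {σ : Equiv.Perm (Fin n)} {x y : Fin n}
    (hx : minimalPeriod σ x = k₁) (hy : minimalPeriod σ y = k₂)
    (i : Fin k₁) (j : Fin k₂) :
    ∀ a, σ (emap σ x y i j a) = emap σ x y i j (nxt k₁ k₂ a) := by
  rintro (t | t)
  · show σ ((⇑σ)^[i.1 + t.1] x) = (⇑σ)^[i.1 + (t + 1 : Fin k₁).1] x
    rw [← Function.iterate_succ_apply' (⇑σ) (i.1 + t.1) x]
    refine iter_congr hx ?_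
    rw [val_add_one_mod]
    have h1 : (i.1 + (t.1 + 1) % k₁) % k₁ = (i.1 + (t.1 + 1)) % k₁ :=
      Nat.ModEq.add_left i.1 (Nat.mod_modEq _ _)
    rw [h1, Nat.succ_eq_add_one, Nat.add_assoc]
  · show σ ((⇑σ)^[j.1 + t.1] y) = (⇑σ)^[j.1 + (t + 1 : Fin k₂).1] y
    rw [← Function.iterate_succ_apply' (⇑σ) (j.1 + t.1) y]
    refine iter_congr hy ?_
    rw [val_add_one_mod]
    have h1 : (j.1 + (t.1 + 1) % k₂) % k₂ = (j.1 + (t.1 + 1)) % k₂ :=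
      Nat.ModEq.add_left j.1 (Nat.mod_modEq _ _)
    rw [h1, Nat.succ_eq_add_one, Nat.add_assoc]

lemma step1 (n k₁ k₂ : ℕ) (hk₁ : 0 < k₁) (hk₂ : 0 < k₂) (hne : k₁ ≠ k₂)
    [NeZero k₁] [NeZero k₂] :
    Nat.card {σ : Equiv.Perm (Fin n) //
        (∃ x, Function.minimalPeriod σ x = k₁) ∧ (∃ x, Function.minimalPeriod σ x = k₂)}
      * (k₁ * k₂) ≤ Nat.card (PP n k₁ k₂) := by
  set S := {σ : Equiv.Perm (Fin n) //
      (∃ x, Function.minimalPeriod σ x = k₁) ∧ (∃ x, Function.minimalPeriod σ x = k₂)} with hS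
  let F : S × Fin k₁ × Fin k₂ → PP n k₁ k₂ := fun s =>
    ⟨(s.1.1, ⟨emap s.1.1 s.1.2.1.choose s.1.2.2.choose s.2.1 s.2.2,
        emap_inj hk₁ hk₂ s.1.2.1.choose_spec s.1.2.2.choose_spec hne s.2.1 s.2.2⟩),
      emap_prop s.1.2.1.choose_spec s.1.2.2.choose_spec s.2.1 s.2.2⟩
  have hFinj : Injective F := by
    rintro ⟨⟨σ, hσ⟩, i, j⟩ ⟨⟨τ, hτ⟩, i', j'⟩ h
    have h1 : σ = τ := congrArg (fun p : PP n k₁ k₂ => p.1.1) h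
    subst h1
    obtain rfl : hσ = hτ := Subsingleton.elim _ _
    have h2 : emap σ hσ.1.choose hσ.2.choose i j = emap σ hσ.1.choose hσ.2.choose i' j' :=
      congrArg (fun p : PP n k₁ k₂ => ⇑p.1.2) h
    have e1 := congrFun h2 (Sum.inl 0)
    have e2 := congrFun h2 (Sum.inr 0)
    simp only [emap, Sum.elim_inl, Sum.elim_inr, Fin.val_zero, Nat.add_zero] at e1 e2
    have hi : i.1 % k₁ = i'.1 % k₁ := iter_inj hk₁ hσ.1.choose_spec e1
    have hj : j.1 % k₂ = j'.1 % k₂ := iter_inj hk₂ hσ.2.choose_spec e2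
    rw [Nat.mod_eq_of_lt i.isLt, Nat.mod_eq_of_lt i'.isLt] at hi
    rw [Nat.mod_eq_of_lt j.isLt, Nat.mod_eq_of_lt j'.isLt] at hj
    simp [Prod.ext_iff, Fin.ext_iff, hi, hj]
  calc Nat.card S * (k₁ * k₂) = Nat.card (S × Fin k₁ × Fin k₂) := by
        simp [Nat.card_prod, Nat.card_eq_fintype_card, mul_assoc]
    _ ≤ Nat.card (PP n k₁ k₂) := Nat.card_le_card_of_injective F hFinj

end Stmt0Aux

/-- For a uniformly random permutation of `{1,...,n}` and distinct `k₁ < k₂ ≤ n`, the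
probability that the permutation has both a cycle of length `k₁` and a cycle of length `k₂`
is at most `1/(k₁·k₂)`.  A cycle of length `k` means a point whose orbit under the
permutation has size `k` (i.e. whose minimal period is `k`). -/
theorem stmt0 (n k₁ k₂ : ℕ) (hk₁ : 0 < k₁) (hlt : k₁ < k₂) (hk₂ : k₂ ≤ n) :
    (Nat.card {σ : Equiv.Perm (Fin n) //
        (∃ x, Function.minimalPeriod σ x = k₁) ∧ (∃ x, Function.minimalPeriod σ x = k₂)} : ℝ)
      / (Nat.card (Equiv.Perm (Fin n))) ≤ 1 / (k₁ * k₂) := by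
  have hk₂pos : 0 < k₂ := hk₁.trans hlt
  haveI : NeZero k₁ := ⟨hk₁.ne'⟩
  haveI : NeZero k₂ := ⟨hk₂pos.ne'⟩
  have key : Nat.card {σ : Equiv.Perm (Fin n) //
        (∃ x, Function.minimalPeriod σ x = k₁) ∧ (∃ x, Function.minimalPeriod σ x = k₂)}
      * (k₁ * k₂) ≤ n.factorial :=
    (Stmt0Aux.step1 n k₁ k₂ hk₁ hk₂pos hlt.ne).trans (Stmt0Aux.step2 n k₁ k₂)
  have hperm : Nat.card (Equiv.Perm (Fin n)) = n.factorial := by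
    simp [Nat.card_eq_fintype_card, Fintype.card_perm]
  rw [hperm]
  have hfac : (0 : ℝ) < (n.factorial : ℝ) := by exact_mod_cast n.factorial_pos
  have hkk : (0 : ℝ) < (k₁ : ℝ) * (k₂ : ℝ) := by
    have := Nat.mul_pos hk₁ hk₂pos
    exact_mod_cast this
  rw [div_le_div_iff₀ hfac (by push_cast; exact hkk)]
  have := (Nat.cast_le (α := ℝ)).mpr key
  push_cast at this ⊢
  nlinarith [this]
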